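/- Let k ≥ 3 be an integer and let p_{c,1} = (k − √(k²−4))/(2k), p_{c,2} = (k + √(k²−4))/(2k). For p ∈ (p_{c,1}, p_{c,2}), let ζ(p) denote the unique x ∈ (0,1] with x = 1 − (1 − p(1−p)·x)^(k²). Then ζ is strictly increasing on (p_{c,1}, 1/2], strictly decreasing on [1/2, p_{c,2}), and attains its maximum at p = 1/2, where ζ(1/2) equals the unique x ∈ (0,1] with x = 1 − (1 − x/4)^(k²). -/

import Mathlib

private lemma pow_convex_aux (n : ℕ) (hn : 2 ≤ n) (c : ℝ) (hc : 0 ≤ c) (hc1 : c < 1)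
    (l : ℝ) (hl : 0 < l) (hl1 : l < 1) : (l * c + (1 - l)) ^ n < l * c ^ n + (1 - l) := by
  have hb' : (0:ℝ) < 1 - l := by linarith
  have hab : l + (1 - l) = 1 := by ring
  have h := (strictConvexOn_pow hn).2 (Set.mem_Ici.2 hc) (Set.mem_Ici.2 (zero_le_one))
    (ne_of_lt hc1) hl hb' hab
  simpa using h

private lemma key_aux (n : ℕ) (hn : 2 ≤ n) {q a b : ℝ} (hq : 0 < q) (hq4 : q ≤ 1/4)
    (ha : 0 < a) (hab : a < b) (hb1 : b ≤ 1) (hb : b ≤ 1 - (1 - q * b) ^ n) :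
    a < 1 - (1 - q * a) ^ n := by
  set l : ℝ := a / b with hl
  have hb0 : 0 < b := lt_trans ha hab
  have hl0 : 0 < l := div_pos ha hb0
  have hl1 : l < 1 := (div_lt_one hb0).2 hab
  have hc0 : 0 ≤ 1 - q * b := by nlinarith
  have hc1 : 1 - q * b < 1 := by nlinarith
  have h := pow_convex_aux n hn _ hc0 hc1 l hl0 hl1
  have hrw : l * (1 - q * b) + (1 - l) = 1 - q * a := by
    rw [hl]; field_simp; ring
  rw [hrw] at h
  have hlb : l * b = a := by rw [hl]; field_simp
  nlinarith [h, hb]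

private lemma fixed_lt (n : ℕ) (hn : 2 ≤ n) {q1 q2 x1 x2 : ℝ} (hq1 : 0 < q1)
    (hq12 : q1 < q2) (hq2 : q2 ≤ 1/4) (hx1 : x1 ∈ Set.Ioc (0:ℝ) 1)
    (hx2 : x2 ∈ Set.Ioc (0:ℝ) 1) (e1 : x1 = 1 - (1 - q1 * x1) ^ n)
    (e2 : x2 = 1 - (1 - q2 * x2) ^ n) : x1 < x2 := by
  obtain ⟨hx10, hx11⟩ := hx1
  obtain ⟨hx20, hx21⟩ := hx2
  have hstep : x1 < 1 - (1 - q2 * x1) ^ n := by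
    have hlt : 1 - q2 * x1 < 1 - q1 * x1 := by nlinarith
    have h0 : 0 ≤ 1 - q2 * x1 := by nlinarith
    have := pow_lt_pow_left₀ hlt h0 (by omega : n ≠ 0)
    linarith [e1, this]
  rcases lt_trichotomy x1 x2 with h | h | h
  · exact h
  · exfalso; rw [h] at hstep; linarith [e2, hstep]
  · exfalso
    have := key_aux n hn (lt_trans hq1 hq12) hq2 hx20 h hx11 (le_of_lt hstep)
    linarith [e2, this]

private lemma fixed_unique (n : ℕ) (hn : 2 ≤ n) {q x y : ℝ} (hq : 0 < q) (hq4 : q ≤ 1/4)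
    (hx : x ∈ Set.Ioc (0:ℝ) 1) (hy : y ∈ Set.Ioc (0:ℝ) 1)
    (ex : x = 1 - (1 - q * x) ^ n) (ey : y = 1 - (1 - q * y) ^ n) : x = y := by
  rcases lt_trichotomy x y with h | h | h
  · exfalso
    have := key_aux n hn hq hq4 hx.1 h hy.2 (le_of_eq ey)
    linarith [ex, this]
  · exact h
  · exfalso
    have := key_aux n hn hq hq4 hy.1 h hx.2 (le_of_eq ex)
    linarith [ey, this]

theorem zebra_percolation_monotonicity (k : ℕ) (hk : 3 ≤ k)
    (ζ : ℝ → ℝ)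
    (hζ : ∀ p ∈ Set.Ioo (((k : ℝ) - Real.sqrt ((k : ℝ) ^ 2 - 4)) / (2 * k))
                        (((k : ℝ) + Real.sqrt ((k : ℝ) ^ 2 - 4)) / (2 * k)),
      ζ p ∈ Set.Ioc (0 : ℝ) 1 ∧ ζ p = 1 - (1 - p * (1 - p) * ζ p) ^ (k ^ 2)) :
    StrictMonoOn ζ (Set.Ioc (((k : ℝ) - Real.sqrt ((k : ℝ) ^ 2 - 4)) / (2 * k)) (1 / 2)) ∧
    StrictAntiOn ζ (Set.Ico (1 / 2) (((k : ℝ) + Real.sqrt ((k : ℝ) ^ 2 - 4)) / (2 * k))) ∧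
    (∀ p ∈ Set.Ioo (((k : ℝ) - Real.sqrt ((k : ℝ) ^ 2 - 4)) / (2 * k))
                   (((k : ℝ) + Real.sqrt ((k : ℝ) ^ 2 - 4)) / (2 * k)),
      ζ p ≤ ζ (1 / 2)) ∧
    (ζ (1 / 2) ∈ Set.Ioc (0 : ℝ) 1 ∧ ζ (1 / 2) = 1 - (1 - ζ (1 / 2) / 4) ^ (k ^ 2) ∧
      ∀ x ∈ Set.Ioc (0 : ℝ) 1, x = 1 - (1 - x / 4) ^ (k ^ 2) → x = ζ (1 / 2)) := by
  have hk3 : (3:ℝ) ≤ (k:ℝ) := by exact_mod_cast hk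
  set s : ℝ := Real.sqrt ((k : ℝ) ^ 2 - 4) with hs
  set pc1 : ℝ := ((k : ℝ) - s) / (2 * k) with hpc1
  set pc2 : ℝ := ((k : ℝ) + s) / (2 * k) with hpc2
  have hs0 : 0 < s := Real.sqrt_pos.2 (by nlinarith)
  have hsk : s < k := by
    rw [hs]
    exact (Real.sqrt_lt' (by linarith)).2 (by nlinarith)
  have hk0 : (0:ℝ) < 2 * k := by linarith
  have hpc10 : 0 < pc1 := div_pos (by linarith) hk0
  have hpc1h : pc1 < 1/2 := by rw [hpc1, div_lt_iff₀ hk0]; nlinarith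
  have hhpc2 : (1:ℝ)/2 < pc2 := by rw [hpc2, lt_div_iff₀ hk0]; nlinarith
  have hpc21 : pc2 < 1 := by rw [hpc2, div_lt_one hk0]; nlinarith
  have hn : 2 ≤ k ^ 2 := by nlinarith
  have hmem : ∀ p ∈ Set.Ioo pc1 pc2, 0 < p * (1 - p) ∧ p * (1 - p) ≤ 1/4 := by
    intro p hp
    have h0 : 0 < p := lt_trans hpc10 hp.1
    have h1 : p < 1 := lt_trans hp.2 hpc21
    constructor
    · nlinarith
    · nlinarith [sq_nonneg (p - 1/2)]
  have hhalf : (1:ℝ)/2 ∈ Set.Ioo pc1 pc2 := ⟨hpc1h, hhpc2⟩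
  have hζh := hζ _ hhalf
  have hlt : ∀ p1 ∈ Set.Ioo pc1 pc2, ∀ p2 ∈ Set.Ioo pc1 pc2,
      p1 * (1 - p1) < p2 * (1 - p2) → ζ p1 < ζ p2 := by
    intro p1 h1 p2 h2 hq
    obtain ⟨hz1, e1⟩ := hζ _ h1
    obtain ⟨hz2, e2⟩ := hζ _ h2
    exact fixed_lt (k ^ 2) hn (hmem _ h1).1 hq (hmem _ h2).2 hz1 hz2 e1 e2
  refine ⟨?_, ?_, ?_, ?_⟩
  · intro p1 h1 p2 h2 h12
    have hm1 : p1 ∈ Set.Ioo pc1 pc2 := ⟨h1.1, lt_of_le_of_lt h1.2 hhpc2⟩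
    have hm2 : p2 ∈ Set.Ioo pc1 pc2 := ⟨h2.1, lt_of_le_of_lt h2.2 hhpc2⟩
    exact hlt _ hm1 _ hm2 (by nlinarith [h1.2, h2.2])
  · intro p1 h1 p2 h2 h12
    have hm1 : p1 ∈ Set.Ioo pc1 pc2 := ⟨lt_of_lt_of_le hpc1h h1.1, h1.2⟩
    have hm2 : p2 ∈ Set.Ioo pc1 pc2 := ⟨lt_of_lt_of_le hpc1h h2.1, h2.2⟩
    exact hlt _ hm2 _ hm1 (by nlinarith [h1.1, h2.1])
  · intro p hp
    rcases eq_or_ne p (1/2) with h | h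
    · rw [h]
    · have hne : p - 1/2 ≠ 0 := sub_ne_zero.2 h
      have hq : p * (1 - p) < (1/2) * (1 - 1/2) := by
        have h2 : (p - 1/2) ^ 2 > 0 := by positivity
        nlinarith [h2]
      exact le_of_lt (hlt _ hp _ hhalf hq)
  · obtain ⟨hz, e⟩ := hζh
    have he4 : ζ (1/2) = 1 - (1 - ζ (1/2) / 4) ^ (k ^ 2) := by
      have h4 : (1:ℝ)/2 * (1 - 1/2) * ζ (1/2) = ζ (1/2) / 4 := by ring
      conv_lhs => rw [e, h4]
    refine ⟨hz, he4, ?_⟩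
    intro x hx ex
    refine fixed_unique (k ^ 2) hn (by norm_num : (0:ℝ) < 1/4) le_rfl hx hz ?_ ?_
    · rw [show (1:ℝ)/4 * x = x / 4 by ring]; exact ex
    · rw [show (1:ℝ)/4 * ζ (1/2) = ζ (1/2) / 4 by ring]; exact he4
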